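/- Fix integers m ≥ 3 and q ≥ 1. For every positive integer D, the number of words w = (w₁,…,w_m) ∈ {2,3,…,q+1}^m with D_w = D is at most σ₀(D), the number of positive divisors of D. -/
import Mathlib


/-- The continuant `K_i(x₁,…,x_i)`: `K₀ = 1`, `K₁ = x₁`, and
`K_i = x_i · K_{i-1} − K_{i-2}` for `i ≥ 2`. -/
def contK (x : ℕ → ℤ) : ℕ → ℤ
  | 0 => 1
  | 1 => x 1
  | (n + 2) => x (n + 2) * contK x (n + 1) - contK x n

/-- Extension of a word `w = (w₁,…,w_m)` (indexed by `Fin m`) to a sequence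
indexed from `1`: position `j ∈ {1,…,m}` has value `w_j`. -/
def wext (m : ℕ) (w : Fin m → ℕ) : ℕ → ℤ :=
  fun j => if h : j - 1 < m then (w ⟨j - 1, h⟩ : ℤ) else 2

/-- `D_w = K_m(w₁,…,w_m) · K_{m−1}(w₁,…,w_{m−1})`. -/
def Dword (m : ℕ) (w : Fin m → ℕ) : ℤ :=
  contK (wext m w) m * contK (wext m w) (m - 1)

/-- Monotonicity/positivity of continuants with entries ≥ 2. -/
lemma contK_mono (x : ℕ → ℤ) : ∀ n : ℕ, (∀ j, 1 ≤ j → j ≤ n + 1 → 2 ≤ x j) →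
    1 ≤ contK x n ∧ contK x n < contK x (n + 1) := by
  intro n
  induction n with
  | zero =>
    intro hx
    have h1 : 2 ≤ x 1 := hx 1 le_rfl le_rfl
    simp only [contK]
    omega
  | succ k ih =>
    intro hx
    have ihk := ih (fun j h1 h2 => hx j h1 (by omega))
    have hxk : 2 ≤ x (k + 2) := hx (k + 2) (by omega) le_rfl
    have heq : contK x (k + 2) = x (k + 2) * contK x (k + 1) - contK x k := rfl
    constructor
    · omega
    · nlinarith [ihk.1, ihk.2]

/-- Injectivity: equal consecutive continuants determine the word. -/
lemma contK_inj : ∀ n : ℕ, 1 ≤ n → ∀ x y : ℕ → ℤ,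
    (∀ j, 1 ≤ j → j ≤ n → 2 ≤ x j) → (∀ j, 1 ≤ j → j ≤ n → 2 ≤ y j) →
    contK x n = contK y n → contK x (n - 1) = contK y (n - 1) →
    ∀ j, 1 ≤ j → j ≤ n → x j = y j := by
  intro n hn
  induction n, hn using Nat.le_induction with
  | base =>
    intro x y hx hy h1 _ j hj1 hj2
    have : j = 1 := by omega
    subst this
    simpa only [contK] using h1
  | succ n hn ih =>
    intro x y hx hy h1 h0 j hj1 hj2
    obtain ⟨k, rfl⟩ : ∃ k, n = k + 1 := ⟨n - 1, by omega⟩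
    -- continuant recursion at n+1 = k+2
    have hex : contK x (k + 2) = x (k + 2) * contK x (k + 1) - contK x k := rfl
    have hey : contK y (k + 2) = y (k + 2) * contK y (k + 1) - contK y k := rfl
    have hxm := contK_mono x k (fun j a b => hx j a (by omega))
    have hym := contK_mono y k (fun j a b => hy j a (by omega))
    have h0' : contK x (k + 1) = contK y (k + 1) := by simpa using h0
    set K := contK y (k + 1) with hK
    have haK : (x (k + 2) - y (k + 2)) * K = contK x k - contK y k := by
      rw [h0'] at hex; linarith [h1, hex, hey]
    have hKpos : 1 < K := by
      have := hym.2; have := hym.1; omega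
    have hxkK : contK x k < K := by rw [← h0']; exact hxm.2
    have hykK : contK y k < K := hym.2
    have htop : x (k + 2) = y (k + 2) ∧ contK x k = contK y k := by
      set a := x (k + 2) - y (k + 2) with ha
      have hlt : a * K < K := by rw [haK]; linarith [hym.1]
      have hgt : -K < a * K := by rw [haK]; linarith [hxm.1]
      have ha1 : a < 1 := by nlinarith
      have ha2 : -1 < a := by nlinarith
      have ha0 : a = 0 := by omega
      constructor
      · omega
      · have := haK; rw [ha0] at this; linarith
    rcases Nat.lt_or_ge j (k + 2) with hj | hj
    · exact ih x y (fun j a b => hx j a (by omega)) (fun j a b => hy j a (by omega))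
        h0' (by simpa using htop.2) j hj1 (by omega)
    · have : j = k + 2 := by omega
      subst this
      exact htop.1

lemma wext_ge (m : ℕ) (w : Fin m → ℕ) (hw : ∀ i, 2 ≤ w i) :
    ∀ j, 1 ≤ j → j ≤ m → 2 ≤ wext m w j := by
  intro j h1 h2
  have h : j - 1 < m := by omega
  simp only [wext, dif_pos h]
  exact_mod_cast hw _

theorem fiber_card_le_divisor_count (m q : ℕ) (hm : 3 ≤ m) (hq : 1 ≤ q)
    (D : ℕ) (hD : 0 < D) :
    Set.ncard {w : Fin m → ℕ |
        (∀ i, 2 ≤ w i ∧ w i ≤ q + 1) ∧ Dword m w = (D : ℤ)} ≤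
      (Nat.divisors D).card := by
  classical
  set S : Set (Fin m → ℕ) := {w : Fin m → ℕ |
      (∀ i, 2 ≤ w i ∧ w i ≤ q + 1) ∧ Dword m w = (D : ℤ)} with hS
  obtain ⟨k, rfl⟩ : ∃ k, m = k + 1 := ⟨m - 1, by omega⟩
  set f : (Fin (k+1) → ℕ) → ℕ := fun w => (contK (wext (k+1) w) k).toNat with hf
  -- basic facts for any w ∈ S
  have key : ∀ w ∈ S, 1 ≤ contK (wext (k+1) w) k ∧
      contK (wext (k+1) w) k < contK (wext (k+1) w) (k+1) := by
    intro w hw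
    exact contK_mono _ k (wext_ge _ w (fun i => (hw.1 i).1))
  have hD' : ∀ w ∈ S, contK (wext (k+1) w) (k+1) * contK (wext (k+1) w) k = (D : ℤ) := by
    intro w hw
    have := hw.2
    simpa [Dword] using this
  -- f maps S into divisors
  have hmaps : Set.MapsTo f S ↑(Nat.divisors D) := by
    intro w hw
    have hk := key w hw
    have hDw := hD' w hw
    simp only [Finset.coe_sort_coe, Finset.mem_coe, Nat.mem_divisors]
    refine ⟨?_, by omega⟩
    have hdvd : (f w : ℤ) ∣ (D : ℤ) := by
      have : (f w : ℤ) = contK (wext (k+1) w) k := Int.toNat_of_nonneg (by linarith [hk.1])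
      rw [this, ← hDw]
      exact ⟨_, (mul_comm _ _)⟩
    exact_mod_cast hdvd
  -- f is injective on S
  have hinj : Set.InjOn f S := by
    intro w hw w' hw' hfe
    have hkw := key w hw
    have hkw' := key w' hw'
    have hc : contK (wext (k+1) w) k = contK (wext (k+1) w') k := by
      have e1 : ((f w : ℤ)) = contK (wext (k+1) w) k := Int.toNat_of_nonneg (by linarith [hkw.1])
      have e2 : ((f w' : ℤ)) = contK (wext (k+1) w') k := Int.toNat_of_nonneg (by linarith [hkw'.1])
      rw [← e1, ← e2, hfe]
    have hc0 : contK (wext (k+1) w) k ≠ 0 := by linarith [hkw.1]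
    have hm' : contK (wext (k+1) w) (k+1) = contK (wext (k+1) w') (k+1) := by
      have := (hD' w hw).trans (hD' w' hw').symm
      rw [hc] at this
      exact mul_right_cancel₀ (by rw [← hc]; exact hc0) this
    have hall := contK_inj (k+1) (by omega) (wext (k+1) w) (wext (k+1) w')
      (wext_ge _ w (fun i => (hw.1 i).1)) (wext_ge _ w' (fun i => (hw'.1 i).1))
      hm' (by simpa using hc)
    funext i
    have hi : (i : ℕ) + 1 ≤ k + 1 := by omega
    have := hall ((i : ℕ) + 1) (by omega) hi
    have hlt : (i : ℕ) < k + 1 := by omega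
    simp only [wext, Nat.add_sub_cancel, dif_pos hlt] at this
    have : w ⟨i, by omega⟩ = w' ⟨i, by omega⟩ := by exact_mod_cast this
    simpa using this
  calc S.ncard ≤ (↑(Nat.divisors D) : Set ℕ).ncard :=
        Set.ncard_le_ncard_of_injOn f hmaps hinj (Set.toFinite _)
    _ = (Nat.divisors D).card := by simp [Set.ncard_coe_finset]
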